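/- Let n ≥ 1 and let C be a cyclic ZMod 2-submodule of (Fin n → ZMod 2) with minimum distance at least 3 (every nonzero codeword has Hamming weight at least 3). Then for every l ∈ {0, 1, …, n−1} and all p, q ∈ {0, 1, …, n−1} with p ≠ q, the vector L(v_p, l) + L(v_q, l) does not belong to C. (This is the single-code core of the paper's main theorem: the shifted consecutive error set E^z_{l,n} is distinguishable, since two such errors have equal syndrome exactly when their difference lies in the kernel of the parity check matrix, which equals C.) -/
import Mathlib


/-- The consecutive tail vector `v_p`: indicator of the last `p` coordinates. -/
def tailVec (n p : ℕ) : Fin n → ZMod 2 := fun j => if n - p ≤ j.val then 1 else 0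

/-- Left cyclic shift by `l` of a vector `v : Fin n → ZMod 2`. -/
def shiftL {n : ℕ} (v : Fin n → ZMod 2) (l : ℕ) : Fin n → ZMod 2 :=
  fun j => v ⟨(j.val + l) % n, Nat.mod_lt _ j.pos⟩

/-- A code is cyclic if it is invariant under left cyclic shifts. -/
def IsCyclicCode {n : ℕ} (C : Submodule (ZMod 2) (Fin n → ZMod 2)) : Prop :=
  ∀ v ∈ C, ∀ l : ℕ, shiftL v l ∈ C

/-- The dual code `C⊥` with respect to the standard bilinear form. -/
def dualCode {n : ℕ} (C : Submodule (ZMod 2) (Fin n → ZMod 2)) :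
    Submodule (ZMod 2) (Fin n → ZMod 2) where
  carrier := {u | ∀ w ∈ C, ∑ j, u j * w j = 0}
  add_mem' := by
    intro a b ha hb w hw
    simp only [Set.mem_setOf_eq, Pi.add_apply, add_mul] at *
    rw [Finset.sum_add_distrib, ha w hw, hb w hw, add_zero]
  zero_mem' := by
    intro w hw
    simp
  smul_mem' := by
    intro c a ha w hw
    simp only [Set.mem_setOf_eq, Pi.smul_apply, smul_eq_mul, mul_assoc] at *
    rw [← Finset.mul_sum, ha w hw, mul_zero]

lemma shiftL_shiftL {n : ℕ} (v : Fin n → ZMod 2) (l m : ℕ) :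
    shiftL (shiftL v l) m = shiftL v (m + l) := by
  funext j
  unfold shiftL
  congr 1
  apply Fin.ext
  simp [Nat.mod_add_mod, Nat.add_assoc]

lemma shiftL_n {n : ℕ} (v : Fin n → ZMod 2) : shiftL v n = v := by
  funext j
  unfold shiftL
  congr 1
  apply Fin.ext
  simp [Nat.add_mod_right, Nat.mod_eq_of_lt j.isLt]

lemma ite_ne_helper (A B : Prop) [Decidable A] [Decidable B]
    (h : (if A then (1 : ZMod 2) else 0) ≠ (if B then 1 else 0)) :
    (A ∧ ¬B) ∨ (¬A ∧ B) := by
  by_cases hA : A <;> by_cases hB : B <;> simp [hA, hB] at h ⊢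

lemma key (n : ℕ) (C : Submodule (ZMod 2) (Fin n → ZMod 2))
    (hC : IsCyclicCode C) (hd : ∀ w ∈ C, w ≠ 0 → 3 ≤ hammingNorm w)
    (p q : ℕ) (hq : q < n) (hpq : p < q) :
    tailVec n p + tailVec n q ∉ C := by
  intro hf
  have hn : 1 ≤ n := lt_of_le_of_lt (Nat.zero_le q) hq
  set f : Fin n → ZMod 2 := tailVec n p + tailVec n q with hfdef
  have hfval : ∀ j : Fin n, f j = if n - q ≤ j.val ∧ j.val < n - p then 1 else 0 := by
    intro j
    have hj := j.isLt
    simp only [hfdef, Pi.add_apply, tailVec]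
    split_ifs with h1 h2 h3 h3 h2 h3 h3 <;> first | decide | omega
  have hu : f + shiftL f 1 ∈ C := add_mem hf (hC f hf 1)
  set u : Fin n → ZMod 2 := f + shiftL f 1 with hudef
  have huval : ∀ j : Fin n, u j = f j + f ⟨(j.val + 1) % n, Nat.mod_lt _ j.pos⟩ := fun j => rfl
  have hadd : ∀ x y : ZMod 2, x + y ≠ 0 ↔ x ≠ y := by decide
  -- a witness coordinate where u = 1
  have ha : n - q - 1 < n := by omega
  have hb : (n - q - 1 + 1) % n = n - q := by
    rw [Nat.mod_eq_of_lt] <;> omega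
  have hune : u ⟨n - q - 1, ha⟩ = 1 := by
    rw [huval, hfval, hfval]
    simp only [hb]
    rw [if_neg (by omega), if_pos (by omega)]
    decide
  have hu0 : u ≠ 0 := by
    intro h
    rw [h] at hune
    simp at hune
  -- support bound
  have hsub : ({j | u j ≠ 0} : Finset (Fin n)) ⊆
      {⟨n - q - 1, ha⟩, ⟨n - p - 1, by omega⟩} := by
    intro k hk
    simp only [Finset.mem_filter, Finset.mem_univ, true_and] at hk
    rw [huval, hadd] at hk
    rw [hfval, hfval] at hk
    have hxor := ite_ne_helper _ _ hk
    simp only [Fin.val_mk] at hxor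
    have hk1 := k.isLt
    have hkv : k.val = n - q - 1 ∨ k.val = n - p - 1 := by
      rcases Nat.lt_or_ge (k.val + 1) n with h | h
      · rw [Nat.mod_eq_of_lt h] at hxor
        omega
      · have hm : k.val + 1 = n := by omega
        rw [hm, Nat.mod_self] at hxor
        omega
    simp only [Finset.mem_insert, Finset.mem_singleton]
    rcases hkv with h | h
    · left; exact Fin.ext h
    · right; exact Fin.ext h
  have hcard : hammingNorm u ≤ 2 := by
    calc hammingNorm u ≤ ({⟨n - q - 1, ha⟩, ⟨n - p - 1, by omega⟩} : Finset (Fin n)).card :=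
          Finset.card_le_card hsub
      _ ≤ 2 := by
          apply le_trans (Finset.card_insert_le _ _)
          simp
  have := hd u hu hu0
  omega

theorem stmt7 (n : ℕ) (hn : 1 ≤ n) (C : Submodule (ZMod 2) (Fin n → ZMod 2))
    (hC : IsCyclicCode C)
    (hd : ∀ w ∈ C, w ≠ 0 → 3 ≤ hammingNorm w) :
    ∀ l < n, ∀ p q : ℕ, p < n → q < n → p ≠ q →
      shiftL (tailVec n p) l + shiftL (tailVec n q) l ∉ C := by
  intro l hl p q hp hq hpq hmem
  have hw : shiftL (tailVec n p) l + shiftL (tailVec n q) l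
      = shiftL (tailVec n p + tailVec n q) l := rfl
  rw [hw] at hmem
  have hf : tailVec n p + tailVec n q ∈ C := by
    have h1 := hC _ hmem (n - l)
    rw [shiftL_shiftL] at h1
    have : n - l + l = n := by omega
    rw [this, shiftL_n] at h1
    exact h1
  rcases Nat.lt_or_ge p q with h | h
  · exact key n C hC hd p q hq h hf
  · have h' : q < p := lt_of_le_of_ne h (Ne.symm hpq)
    apply key n C hC hd q p hp h'
    rwa [add_comm]
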